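/- Let X be a topologically complete metric space, let A ⊆ X be a nonempty G_δ set, and let g be a porosity function. Then A is not σ-⟨g⟩-porous if and only if A contains a member of some Foran system for ⟨g⟩-porosity in X. -/

import Mathlib

open Metric Filter Set Topology TopologicalSpace NNReal ENNReal

/-- `A` is `⟨g⟩`-porous at `x` (for a porosity function `g` defined on `[0,h)`) if there are
sequences of centers `c n` and radii `0 < r n < h` with `c n → x`, `U(c n, r n) ∩ A = ∅` and
`x ∈ U(c n, g (r n))` for each `n`. -/
def GPorousAt {X : Type*} [MetricSpace X] (g : ℝ → ℝ) (h : ℝ) (A : Set X) (x : X) : Prop :=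
  ∃ (c : ℕ → X) (r : ℕ → ℝ), Filter.Tendsto c Filter.atTop (nhds x) ∧
    ∀ n, 0 < r n ∧ r n < h ∧ Metric.ball (c n) (r n) ∩ A = ∅ ∧
      x ∈ Metric.ball (c n) (g (r n))

/-- `A` is `⟨g⟩`-porous if it is `⟨g⟩`-porous at each of its points. -/
def GPorous {X : Type*} [MetricSpace X] (g : ℝ → ℝ) (h : ℝ) (A : Set X) : Prop :=
  ∀ x ∈ A, GPorousAt g h A x

/-- `A` is σ-`⟨g⟩`-porous if it is a countable union of `⟨g⟩`-porous sets. -/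
def SigmaGPorous {X : Type*} [MetricSpace X] (g : ℝ → ℝ) (h : ℝ) (A : Set X) : Prop :=
  ∃ B : ℕ → Set X, (∀ n, GPorous g h (B n)) ∧ A = ⋃ n, B n

/-- A Foran system for `⟨g⟩`-porosity in `X`: a nonempty family of nonempty `G_δ` subsets of `X`
such that for each `S` in the family and each open `G` with `S ∩ G ≠ ∅` there is a member
`S* ⊆ S ∩ G` such that `S` is `⟨g⟩`-porous at no point of `S*`. -/
def IsForanSystem {X : Type*} [MetricSpace X] (g : ℝ → ℝ) (h : ℝ) (F : Set (Set X)) : Prop :=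
  F.Nonempty ∧ (∀ S ∈ F, S.Nonempty ∧ IsGδ S) ∧
    ∀ S ∈ F, ∀ G : Set X, IsOpen G → (S ∩ G).Nonempty →
      ∃ T ∈ F, T ⊆ S ∩ G ∧ ∀ x ∈ T, ¬ GPorousAt g h S x

/-- A metric space is topologically complete if its topology is induced by some complete
metric. -/
def TopComplete (X : Type*) [m : MetricSpace X] : Prop :=
  ∃ m' : MetricSpace X, m'.toUniformSpace.toTopologicalSpace =
      m.toUniformSpace.toTopologicalSpace ∧ @CompleteSpace X m'.toUniformSpace

section ForanHelpers

variable {X : Type*} [MetricSpace X] {g : ℝ → ℝ} {h : ℝ}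

lemma gporousAt_mono {A A' : Set X} (hsub : A' ⊆ A) {x : X} (hp : GPorousAt g h A x) :
    GPorousAt g h A' x := by
  obtain ⟨c, r, hc, hr⟩ := hp
  exact ⟨c, r, hc, fun n => ⟨(hr n).1, (hr n).2.1,
    Set.eq_empty_of_subset_empty ((hr n).2.2.1 ▸ Set.inter_subset_inter_right _ hsub),
    (hr n).2.2.2⟩⟩

lemma gporous_mono {A A' : Set X} (hsub : A' ⊆ A) (hp : GPorous g h A) : GPorous g h A' :=
  fun x hx => gporousAt_mono hsub (hp x (hsub hx))

lemma sigma_mono {A A' : Set X} (hsub : A' ⊆ A) (hp : SigmaGPorous g h A) :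
    SigmaGPorous g h A' := by
  obtain ⟨B, hB, rfl⟩ := hp
  refine ⟨fun n => B n ∩ A', fun n => gporous_mono inter_subset_left (hB n), ?_⟩
  ext x; simp only [mem_iUnion, mem_inter_iff]
  constructor
  · intro hx
    obtain ⟨n, hn⟩ := mem_iUnion.1 (hsub hx)
    exact ⟨n, hn, hx⟩
  · rintro ⟨n, _, hx⟩; exact hx

lemma sigma_iUnion {C : ℕ → Set X} (hC : ∀ m, SigmaGPorous g h (C m)) :
    SigmaGPorous g h (⋃ m, C m) := by
  choose B hB hBeq using hC
  refine ⟨fun j => B (Nat.unpair j).1 (Nat.unpair j).2, fun j => hB _ _, ?_⟩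
  ext x
  simp only [mem_iUnion]
  constructor
  · rintro ⟨m, hx⟩
    rw [hBeq m] at hx
    obtain ⟨n, hn⟩ := mem_iUnion.1 hx
    exact ⟨Nat.pair m n, by simpa [Nat.unpair_pair] using hn⟩
  · rintro ⟨j, hj⟩
    exact ⟨(Nat.unpair j).1, (hBeq _) ▸ mem_iUnion.2 ⟨_, hj⟩⟩

lemma sigma_empty : SigmaGPorous g h (∅ : Set X) :=
  ⟨fun _ => ∅, fun _ x hx => absurd hx (Set.notMem_empty x), by simp⟩

lemma g_pos (hh : 0 < h) (hg0 : g 0 = 0) (hg : StrictMonoOn g (Set.Ico 0 h))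
    {ρ : ℝ} (h0 : 0 < ρ) (h1 : ρ < h) : 0 < g ρ := by
  have := hg (Set.mem_Ico.2 ⟨le_refl 0, hh⟩) (Set.mem_Ico.2 ⟨h0.le, h1⟩) h0
  linarith [hg0]

lemma gporousAt_loc (hh : 0 < h) (hg0 : g 0 = 0) (hg : StrictMonoOn g (Set.Ico 0 h))
    {E : Set X} {x : X} (hp : GPorousAt g h E x) {ε : ℝ} (hε : 0 < ε) :
    ∃ c ρ, 0 < ρ ∧ ρ < h ∧ ρ < ε ∧ dist x c < ε ∧ dist x c < g ρ ∧
      Metric.ball c ρ ∩ E = ∅ := by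
  obtain ⟨c, r, hc, hr⟩ := hp
  set ρ₀ : ℝ := min (ε / 2) (h / 2) with hρ₀
  have hρ₀pos : 0 < ρ₀ := lt_min (by linarith) (by linarith)
  have hρ₀h : ρ₀ < h := (min_le_right _ _).trans_lt (by linarith)
  have hρ₀ε : ρ₀ < ε := (min_le_left _ _).trans_lt (by linarith)
  have hgρ₀ : 0 < g ρ₀ := g_pos hh hg0 hg hρ₀pos hρ₀h
  have := (Metric.tendsto_atTop.1 hc) (min ε (g ρ₀)) (lt_min hε hgρ₀)
  obtain ⟨N, hN⟩ := this
  have hd : dist x (c N) < min ε (g ρ₀) := by rw [dist_comm]; exact hN N le_rfl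
  obtain ⟨hr0, hrh, hball, hmem⟩ := hr N
  rcases le_or_gt (r N) ρ₀ with hle | hlt
  · exact ⟨c N, r N, hr0, hrh, lt_of_le_of_lt hle hρ₀ε,
      (hd.trans_le (min_le_left _ _)),
      Metric.mem_ball.1 hmem, hball⟩
  · refine ⟨c N, ρ₀, hρ₀pos, hρ₀h, hρ₀ε, hd.trans_le (min_le_left _ _),
      hd.trans_le (min_le_right _ _), ?_⟩
    exact Set.eq_empty_of_subset_empty (hball ▸ Set.inter_subset_inter_left _
      (Metric.ball_subset_ball hlt.le))

lemma isGδ_gporousAtSet (S : Set X) :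
    IsGδ {x : X | GPorousAt g h S x} := by
  have heq : {x : X | GPorousAt g h S x} =
      ⋂ n : ℕ, {x : X | ∃ c ρ, 0 < ρ ∧ ρ < h ∧ Metric.ball c ρ ∩ S = ∅ ∧
        dist x c < g ρ ∧ dist x c < 1 / (n + 1)} := by
    ext x
    simp only [Set.mem_setOf_eq, Set.mem_iInter]
    constructor
    · rintro ⟨c, r, hc, hr⟩ n
      have hn : (0 : ℝ) < 1 / (n + 1) := by positivity
      obtain ⟨N, hN⟩ := (Metric.tendsto_atTop.1 hc) (1 / (n + 1)) hn
      obtain ⟨hr0, hrh, hball, hmem⟩ := hr N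
      exact ⟨c N, r N, hr0, hrh, hball, Metric.mem_ball.1 hmem,
        by rw [dist_comm]; exact hN N le_rfl⟩
    · intro hx
      choose c ρ h0 h1 h2 h3 h4 using hx
      refine ⟨c, ρ, ?_, fun n => ⟨h0 n, h1 n, h2 n, Metric.mem_ball.2 (h3 n)⟩⟩
      rw [Metric.tendsto_atTop]
      intro ε hε
      obtain ⟨N, hN⟩ := exists_nat_one_div_lt hε
      refine ⟨N, fun n hn => ?_⟩
      rw [dist_comm]
      calc dist x (c n) < 1 / (n + 1) := h4 n
        _ ≤ 1 / (N + 1) := by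
            apply one_div_le_one_div_of_le (by positivity)
            exact_mod_cast by exact_mod_cast Nat.succ_le_succ hn
        _ < ε := hN
  rw [heq]
  apply IsGδ.iInter_of_isOpen
  intro n
  rw [Metric.isOpen_iff]
  rintro x ⟨c, ρ, h0, h1, h2, h3, h4⟩
  refine ⟨min (g ρ - dist x c) (1 / (n + 1) - dist x c), lt_min (by linarith) (by linarith), ?_⟩
  intro y hy
  rw [Metric.mem_ball] at hy
  have hd := dist_triangle y x c
  exact ⟨c, ρ, h0, h1, h2,
    by have := lt_of_lt_of_le hy (min_le_left _ _); linarith,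
    by have := lt_of_lt_of_le hy (min_le_right _ _); linarith⟩

lemma tendsto_of_dist_lt {c : ℕ → X} {x : X} (hd : ∀ n : ℕ, dist x (c n) < 1 / (n + 1)) :
    Filter.Tendsto c Filter.atTop (nhds x) := by
  rw [Metric.tendsto_atTop]
  intro ε hε
  obtain ⟨N, hN⟩ := exists_nat_one_div_lt hε
  refine ⟨N, fun n hn => ?_⟩
  rw [dist_comm]
  calc dist x (c n) < 1 / (n + 1) := hd n
    _ ≤ 1 / (N + 1) := by
        apply one_div_le_one_div_of_le (by positivity)
        exact_mod_cast Nat.succ_le_succ hn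
    _ < ε := hN

lemma sigma_kernel_part (hh : 0 < h) (hg0 : g 0 = 0) (hg : StrictMonoOn g (Set.Ico 0 h))
    (B : Set X) :
    SigmaGPorous g h (B ∩ ⋃₀ {U : Set X | IsOpen U ∧ SigmaGPorous g h (B ∩ U)}) := by
  set 𝒱 : Set (Set X) := {U : Set X | IsOpen U ∧ SigmaGPorous g h (B ∩ U)} with h𝒱
  set target := B ∩ ⋃₀ 𝒱 with htarget
  let V := {U : Set X // U ∈ 𝒱}
  have hchoose : ∀ ξ : V, ∃ P : ℕ → Set X, (∀ n, GPorous g h (P n)) ∧ B ∩ ξ.1 = ⋃ n, P n :=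
    fun ξ => ξ.2.2
  choose P hP hPeq using hchoose
  -- the pieces
  set Q : ℕ → ℕ → Set X := fun n k =>
    ⋃ ξ : V, {y | y ∈ P ξ n ∧ Metric.ball y (1 / (k + 1)) ⊆ ξ.1 ∧
      ∀ η : V, WellOrderingRel η ξ → y ∉ η.1} with hQ
  have hQpor : ∀ n k, GPorous g h (Q n k) := by
    intro n k y hy
    obtain ⟨ξ, hyP, hyb, hymin⟩ := by
      simpa only [hQ, Set.mem_iUnion, Set.mem_setOf_eq] using hy
    have hkpos : (0:ℝ) < 1 / (k + 1) := by positivity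
    have hploc : ∀ j : ℕ, ∃ c ρ, 0 < ρ ∧ ρ < h ∧ ρ < min (1 / (2 * ((k:ℝ) + 1))) (1 / ((j:ℝ) + 1)) ∧
        dist y c < min (1 / (2 * ((k:ℝ) + 1))) (1 / ((j:ℝ) + 1)) ∧ dist y c < g ρ ∧
        Metric.ball c ρ ∩ P ξ n = ∅ := by
      intro j
      exact gporousAt_loc hh hg0 hg (hP ξ n y hyP) (lt_min (by positivity) (by positivity))
    choose c ρ p1 p2 p3 p4 p5 p6 using hploc
    refine ⟨c, ρ, tendsto_of_dist_lt (fun j => (p4 j).trans_le (min_le_right _ _)), fun j => ?_⟩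
    refine ⟨p1 j, p2 j, ?_, Metric.mem_ball.2 (p5 j)⟩
    -- disjointness from Q n k
    rw [Set.eq_empty_iff_forall_notMem]
    rintro z ⟨hzball, hzQ⟩
    obtain ⟨η, hzP, hzb, hzmin⟩ := by
      simpa only [hQ, Set.mem_iUnion, Set.mem_setOf_eq] using hzQ
    have hεle : min (1 / (2 * ((k:ℝ) + 1))) (1 / ((j:ℝ) + 1)) ≤ 1 / (2 * ((k:ℝ) + 1)) := min_le_left _ _
    have hdyz : dist y z < 1 / (k + 1) := by
      have h1 : dist y (c j) < 1 / (2 * ((k:ℝ) + 1)) := (p4 j).trans_le hεle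
      have h2 : dist z (c j) < 1 / (2 * ((k:ℝ) + 1)) :=
        lt_trans (Metric.mem_ball.1 hzball) ((p3 j).trans_le hεle)
      calc dist y z ≤ dist y (c j) + dist (c j) z := dist_triangle _ _ _
        _ = dist y (c j) + dist z (c j) := by rw [dist_comm (c j) z]
        _ < 1 / (2 * ((k:ℝ) + 1)) + 1 / (2 * ((k:ℝ) + 1)) := by linarith
        _ = 1 / ((k:ℝ) + 1) := by
            have : ((k:ℝ) + 1) ≠ 0 := by positivity
            field_simp
            norm_num
    rcases @trichotomous V WellOrderingRel _ η ξ with hlt | heq | hgt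
    · exact hymin η hlt (hzb (Metric.mem_ball.2 hdyz))
    · subst heq
      have : z ∈ Metric.ball (c j) (ρ j) ∩ P η n := ⟨hzball, hzP⟩
      rw [p6 j] at this
      exact this
    · exact hzmin ξ hgt (hyb (Metric.mem_ball.2 (by rw [dist_comm]; exact hdyz)))
  -- covering
  have hcover : target ⊆ ⋃ n, ⋃ k, Q n k := by
    rintro x ⟨hxB, hxU⟩
    obtain ⟨U, hU, hxUmem⟩ := hxU
    have hne : {ξ : V | x ∈ ξ.1}.Nonempty := ⟨⟨U, hU⟩, hxUmem⟩
    have wf : WellFounded (@WellOrderingRel V) := IsWellFounded.wf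
    set ξ₀ := wf.min _ hne with hξ₀def
    have hxξ₀ : x ∈ ξ₀.1 := wf.min_mem _ hne
    have hmin : ∀ η : V, WellOrderingRel η ξ₀ → x ∉ η.1 := by
      intro η hη hmem
      exact wf.not_lt_min _ (show η ∈ {ξ : V | x ∈ ξ.1} from hmem) hη
    have hxP : x ∈ ⋃ n, P ξ₀ n := (hPeq ξ₀) ▸ ⟨hxB, hxξ₀⟩
    obtain ⟨n, hn⟩ := Set.mem_iUnion.1 hxP
    obtain ⟨ε, hε, hball⟩ := Metric.isOpen_iff.1 ξ₀.2.1 x hxξ₀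
    obtain ⟨k, hk⟩ := exists_nat_one_div_lt hε
    refine Set.mem_iUnion.2 ⟨n, Set.mem_iUnion.2 ⟨k, ?_⟩⟩
    refine Set.mem_iUnion.2 ⟨ξ₀, hn, fun y hy => hball ?_, hmin⟩
    exact Metric.mem_ball.2 ((Metric.mem_ball.1 hy).trans hk)
  -- assemble
  refine ⟨fun m => Q (Nat.unpair m).1 (Nat.unpair m).2 ∩ target,
    fun m => gporous_mono Set.inter_subset_left (hQpor _ _), ?_⟩
  apply Set.Subset.antisymm
  · intro x hx
    obtain ⟨n, hn⟩ := Set.mem_iUnion.1 (hcover hx)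
    obtain ⟨k, hk⟩ := Set.mem_iUnion.1 hn
    exact Set.mem_iUnion.2 ⟨Nat.pair n k, by simpa [Nat.unpair_pair] using ⟨hk, hx⟩⟩
  · intro x hx
    obtain ⟨m, hm⟩ := Set.mem_iUnion.1 hx
    exact hm.2

lemma sigma_union {A1 A2 : Set X} (h1 : SigmaGPorous g h A1) (h2 : SigmaGPorous g h A2) :
    SigmaGPorous g h (A1 ∪ A2) := by
  have := sigma_iUnion (C := fun m => if m = 0 then A1 else A2)
    (fun m => by split <;> assumption)
  apply sigma_mono ?_ this
  intro x hx
  rcases hx with hx | hx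
  · exact Set.mem_iUnion.2 ⟨0, by simpa using hx⟩
  · exact Set.mem_iUnion.2 ⟨1, by simpa using hx⟩

/-- The non-σ-porous kernel. -/
def Kern (g : ℝ → ℝ) (h : ℝ) (B : Set X) : Set X :=
  B \ ⋃₀ {U : Set X | IsOpen U ∧ SigmaGPorous g h (B ∩ U)}

lemma kern_subset (B : Set X) : Kern g h B ⊆ B := Set.diff_subset

lemma isGδ_kern {B : Set X} (hB : IsGδ B) : IsGδ (Kern g h B) := by
  have hop : IsOpen (⋃₀ {U : Set X | IsOpen U ∧ SigmaGPorous g h (B ∩ U)}) :=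
    isOpen_sUnion fun U hU => hU.1
  exact hB.inter hop.isClosed_compl.isGδ

lemma kern_nonempty {B : Set X} (hh : 0 < h) (hg0 : g 0 = 0)
    (hg : StrictMonoOn g (Set.Ico 0 h)) (hB : ¬SigmaGPorous g h B) :
    (Kern g h B).Nonempty := by
  rw [Set.nonempty_iff_ne_empty]
  intro hemp
  apply hB
  apply sigma_mono ?_ (sigma_kernel_part hh hg0 hg B)
  intro x hx
  refine ⟨hx, ?_⟩
  by_contra hmem
  exact Set.eq_empty_iff_forall_notMem.1 hemp x ⟨hx, hmem⟩

lemma kern_nowhere {B : Set X} (hh : 0 < h) (hg0 : g 0 = 0)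
    (hg : StrictMonoOn g (Set.Ico 0 h)) :
    ∀ G : Set X, IsOpen G → (Kern g h B ∩ G).Nonempty → ¬SigmaGPorous g h (Kern g h B ∩ G) := by
  rintro G hG ⟨x, hxK, hxG⟩ hσ
  have hBG : SigmaGPorous g h (B ∩ G) := by
    apply sigma_mono ?_ (sigma_union hσ (sigma_kernel_part hh hg0 hg B))
    intro b ⟨hbB, hbG⟩
    by_cases hb : b ∈ ⋃₀ {U : Set X | IsOpen U ∧ SigmaGPorous g h (B ∩ U)}
    · exact Or.inr ⟨hbB, hb⟩
    · exact Or.inl ⟨⟨hbB, hb⟩, hbG⟩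
  exact hxK.2 ⟨G, ⟨hG, hBG⟩, hxG⟩

lemma kern_mem_F {B : Set X} (hh : 0 < h) (hg0 : g 0 = 0)
    (hg : StrictMonoOn g (Set.Ico 0 h)) (hBGδ : IsGδ B) (hB : ¬SigmaGPorous g h B) :
    (Kern g h B).Nonempty ∧ IsGδ (Kern g h B) ∧
      ∀ G : Set X, IsOpen G → (Kern g h B ∩ G).Nonempty →
        ¬SigmaGPorous g h (Kern g h B ∩ G) :=
  ⟨kern_nonempty hh hg0 hg hB, isGδ_kern hBGδ, kern_nowhere hh hg0 hg⟩

lemma forward_dir {A : Set X} (hh : 0 < h) (hg0 : g 0 = 0)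
    (hg : StrictMonoOn g (Set.Ico 0 h)) (hGδ : IsGδ A) (hnot : ¬SigmaGPorous g h A) :
    ∃ (F : Set (Set X)) (S : Set X), IsForanSystem g h F ∧ S ∈ F ∧ S ⊆ A := by
  set F : Set (Set X) := {T | T.Nonempty ∧ IsGδ T ∧ T ⊆ A ∧
    ∀ G : Set X, IsOpen G → (T ∩ G).Nonempty → ¬SigmaGPorous g h (T ∩ G)} with hF
  obtain ⟨hKne, hKGδ, hKnw⟩ := kern_mem_F hh hg0 hg hGδ hnot
  have hK0 : Kern g h A ∈ F := ⟨hKne, hKGδ, kern_subset A, hKnw⟩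
  refine ⟨F, Kern g h A, ⟨⟨_, hK0⟩, fun S hS => ⟨hS.1, hS.2.1⟩, ?_⟩, hK0, kern_subset A⟩
  intro S hS G hG hSG
  have hnotSG : ¬SigmaGPorous g h (S ∩ G) := hS.2.2.2 G hG hSG
  set K := Kern g h (S ∩ G) with hKdef
  have hKGδ' : IsGδ K := isGδ_kern (hS.2.1.inter hG.isGδ)
  have hKne' : K.Nonempty := kern_nonempty hh hg0 hg hnotSG
  have hKnw' := kern_nowhere (B := S ∩ G) hh hg0 hg
  have hKsub : K ⊆ S ∩ G := kern_subset _
  obtain ⟨f, hfo, hfP⟩ := (isGδ_gporousAtSet (g := g) (h := h) S).eq_iInter_nat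
  -- K ∩ P is porous
  have hKP : GPorous g h (K ∩ {x : X | GPorousAt g h S x}) := by
    intro x hx
    exact gporousAt_mono (fun y hy => (hKsub hy.1).1) hx.2
  have hKPσ : SigmaGPorous g h (K ∩ {x : X | GPorousAt g h S x}) :=
    ⟨fun _ => _, fun _ => hKP, (Set.iUnion_const _).symm⟩
  have hnall : ¬∀ m, SigmaGPorous g h (K ∩ (f m)ᶜ) := by
    intro hall
    have hKσ : SigmaGPorous g h K := by
      apply sigma_mono ?_ (sigma_union hKPσ (sigma_iUnion hall))
      intro x hx
      by_cases hxP : x ∈ {x : X | GPorousAt g h S x}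
      · exact Or.inl ⟨hx, hxP⟩
      · have : x ∉ ⋂ n, f n := fun hmem => hxP (hfP ▸ hmem)
        obtain ⟨m, hm⟩ : ∃ m, x ∉ f m := by
          by_contra hc; push_neg at hc; exact this (Set.mem_iInter.2 hc)
        exact Or.inr (Set.mem_iUnion.2 ⟨m, hx, hm⟩)
    have := hKnw' Set.univ isOpen_univ (by simpa using hKne')
    rw [Set.inter_univ] at this
    exact this hKσ
  push_neg at hnall
  obtain ⟨m, hm⟩ := hnall
  have hGδm : IsGδ (K ∩ (f m)ᶜ) := hKGδ'.inter (hfo m).isClosed_compl.isGδ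
  obtain ⟨hTne, hTGδ, hTnw⟩ := kern_mem_F hh hg0 hg hGδm hm
  have hTsub : Kern g h (K ∩ (f m)ᶜ) ⊆ S ∩ G := (kern_subset _).trans
    ((Set.inter_subset_left).trans hKsub)
  refine ⟨Kern g h (K ∩ (f m)ᶜ), ⟨hTne, hTGδ, hTsub.trans
    (Set.inter_subset_left.trans hS.2.2.1), hTnw⟩, hTsub, ?_⟩
  intro x hx hpor
  have hxfm : x ∉ f m := ((kern_subset _) hx).2
  have : x ∈ ⋂ n, f n := hfP ▸ (show x ∈ {x : X | GPorousAt g h S x} from hpor)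
  exact hxfm (Set.mem_iInter.1 this m)

end ForanHelpers

lemma topComplete_limit {X : Type*} [mX : MetricSpace X] (hX : TopComplete X) :
    ∃ B : X → ℝ → Set X, (∀ c ε, 0 < ε → c ∈ B c ε) ∧ (∀ c ε, IsOpen (B c ε)) ∧
      ∀ xs : ℕ → X, (∀ n l, n + 1 ≤ l → xs l ∈ B (xs (n + 1)) ((1 / 2) ^ (n + 1))) →
        ∃ y, Filter.Tendsto xs Filter.atTop (nhds y) := by
  obtain ⟨m', htop, hcomp⟩ := hX
  refine ⟨fun c ε => @Metric.ball X m'.toPseudoMetricSpace c ε, ?_, ?_, ?_⟩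
  · exact fun c ε hε => @Metric.mem_ball_self X m'.toPseudoMetricSpace c ε hε
  · intro c ε
    have := @Metric.isOpen_ball X m'.toPseudoMetricSpace c ε
    rwa [show @UniformSpace.toTopologicalSpace X
        (@PseudoMetricSpace.toUniformSpace X m'.toPseudoMetricSpace) =
        mX.toUniformSpace.toTopologicalSpace from htop] at this
  · intro xs hxs
    have hcauchy : @CauchySeq X ℕ m'.toUniformSpace _ xs := by
      rw [@Metric.cauchySeq_iff' X ℕ m'.toPseudoMetricSpace _ _ xs]
      intro ε hε
      obtain ⟨M, hM⟩ := exists_pow_lt_of_lt_one hε (by norm_num : (1:ℝ)/2 < 1)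
      refine ⟨M + 1, fun n hn => ?_⟩
      have hmem := hxs M n hn
      have hd : @dist X m'.toPseudoMetricSpace.toDist (xs n) (xs (M + 1)) < (1/2)^(M+1) :=
        (@Metric.mem_ball X m'.toPseudoMetricSpace _ _ _).1 hmem
      calc @dist X m'.toPseudoMetricSpace.toDist (xs n) (xs (M + 1)) < (1/2)^(M+1) := hd
        _ ≤ (1/2)^M := by
            apply pow_le_pow_of_le_one (by norm_num) (by norm_num)
            omega
        _ < ε := hM
    obtain ⟨y, hy⟩ := @cauchySeq_tendsto_of_complete X ℕ m'.toUniformSpace _ hcomp xs hcauchy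
    refine ⟨y, ?_⟩
    rwa [show @nhds X (@UniformSpace.toTopologicalSpace X m'.toUniformSpace) y =
      @nhds X mX.toUniformSpace.toTopologicalSpace y by rw [htop]] at hy

section ForanMain

variable {X : Type*} [MetricSpace X] {g : ℝ → ℝ} {h : ℝ}

structure ForanStage (X : Type*) [MetricSpace X] where
  S : Set X
  x : X
  r : ℝ
  t : ℝ
  fams : ℕ → ℕ → Set X





lemma backward_dir {A : Set X} (hX : TopComplete X) (hh : 0 < h) (hg0 : g 0 = 0)
    (hg : StrictMonoOn g (Set.Ico 0 h)) {F : Set (Set X)} {S₀ : Set X}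
    (hF : IsForanSystem g h F) (hS₀F : S₀ ∈ F) (hS₀A : S₀ ⊆ A) :
    ¬SigmaGPorous g h A := by
  obtain ⟨Bm, hBmem, hBopen, hBlim⟩ := topComplete_limit hX
  obtain ⟨hFne, hFmem, hFor⟩ := hF
  rintro ⟨Bseq, hBpor, hAeq⟩
  set P : ℕ → Set X := fun n => Bseq n ∩ S₀ with hPdef
  have hPpor : ∀ n, GPorous g h (P n) :=
    fun n => gporous_mono Set.inter_subset_left (hBpor n)
  set Good : ForanStage X → Prop := fun st =>
    st.S ∈ F ∧ st.x ∈ st.S ∧ 0 < st.r ∧ 0 < st.t ∧ st.t < h ∧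
      (∀ m k, IsOpen (st.fams m k)) ∧ (∀ m k, st.S ⊆ st.fams m k) with hGoodDef
  set Rel : ℕ → ForanStage X → ForanStage X → Prop := fun n prev next =>
    next.S ⊆ prev.S ∩ Metric.ball prev.x prev.r ∧
    (∀ z ∈ next.S, ¬GPorousAt g h prev.S z) ∧
    Metric.closedBall next.x (next.r + 2 * next.t) ⊆ Metric.ball prev.x prev.r ∧
    (∀ m ≤ n, ∀ k ≤ n, Metric.closedBall next.x next.r ⊆ prev.fams m k) ∧
    (∀ m ≤ n, next.fams m = prev.fams m) ∧
    (⋂ k, next.fams (n + 1) k = next.S) ∧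
    (Metric.closedBall next.x next.r ∩ P n = ∅ ∨
      ∀ V : Set X, IsOpen V → V ∩ P n = ∅ →
        prev.S ∩ Metric.ball prev.x prev.r ∩ V = ∅) ∧
    Metric.ball next.x next.r ⊆ Bm next.x ((1 / 2) ^ (n + 1)) with hRelDef
  -- step existence
  have step : ∀ (n : ℕ) (prev : ForanStage X), Good prev →
      ∃ next : ForanStage X, Good next ∧ Rel n prev next := by
    intro n prev hprev
    obtain ⟨hSF, hxS, hr, ht, hth, hfo, hSf⟩ := hprev
    have main : ∀ G : Set X, IsOpen G → G ⊆ Metric.ball prev.x prev.r →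
        (prev.S ∩ G).Nonempty →
        ∃ next : ForanStage X, Good next ∧
          (next.S ⊆ prev.S ∩ Metric.ball prev.x prev.r ∧
          (∀ z ∈ next.S, ¬GPorousAt g h prev.S z) ∧
          Metric.closedBall next.x (next.r + 2 * next.t) ⊆ Metric.ball prev.x prev.r ∧
          (∀ m ≤ n, ∀ k ≤ n, Metric.closedBall next.x next.r ⊆ prev.fams m k) ∧
          (∀ m ≤ n, next.fams m = prev.fams m) ∧
          (⋂ k, next.fams (n + 1) k = next.S) ∧
          Metric.closedBall next.x next.r ⊆ G ∧
          Metric.ball next.x next.r ⊆ Bm next.x ((1 / 2) ^ (n + 1))) := by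
      intro G hGopen hGsub hGne
      obtain ⟨S', hS'F, hS'sub, hnp⟩ := hFor prev.S hSF G hGopen hGne
      obtain ⟨x', hx'⟩ := (hFmem S' hS'F).1
      obtain ⟨f', hf'o, hf'eq⟩ := (hFmem S' hS'F).2.eq_iInter_nat
      set O : Set X := (G ∩
          (⋂ m ∈ Finset.range (n + 1), ⋂ k ∈ Finset.range (n + 1), prev.fams m k)) ∩
          Bm x' ((1 / 2) ^ (n + 1)) with hO
      have hOopen : IsOpen O := by
        refine IsOpen.inter (IsOpen.inter hGopen ?_) (hBopen _ _)
        exact isOpen_biInter_finset fun m _ =>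
          isOpen_biInter_finset fun k _ => hfo m k
      have hx'O : x' ∈ O := by
        refine ⟨⟨(hS'sub hx').2, ?_⟩, hBmem _ _ (by positivity)⟩
        simp only [Set.mem_iInter]
        intro m _ k _
        exact hSf m k (hS'sub hx').1
      obtain ⟨ε, hε, hballO⟩ := Metric.isOpen_iff.1 hOopen x' hx'O
      set r' : ℝ := ε / 4 with hr'
      set t' : ℝ := min (ε / 8) (h / 2) with ht'
      have ht'pos : 0 < t' := lt_min (by linarith) (by linarith)
      have ht'h : t' < h := (min_le_right _ _).trans_lt (by linarith)
      have hsum : r' + 2 * t' < ε := by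
        have h1 : t' ≤ ε / 8 := min_le_left _ _
        simp only [hr']; linarith
      have hcbO : Metric.closedBall x' (r' + 2 * t') ⊆ O := fun y hy =>
        hballO (Metric.mem_ball.2 ((Metric.mem_closedBall.1 hy).trans_lt hsum))
      have hcbO' : Metric.closedBall x' r' ⊆ O := fun y hy =>
        hcbO (Metric.mem_closedBall.2 ((Metric.mem_closedBall.1 hy).trans (by
          have : 0 < t' := ht'pos
          linarith)))
      refine ⟨⟨S', x', r', t', Function.update prev.fams (n + 1) f'⟩, ?_, ?_⟩
      · refine ⟨hS'F, hx', by positivity, ht'pos, ht'h, ?_, ?_⟩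
        · intro m k
          rcases eq_or_ne m (n + 1) with rfl | hm
          · simpa only [Function.update_self] using hf'o k
          · simpa only [Function.update_of_ne hm] using hfo m k
        · intro m k
          rcases eq_or_ne m (n + 1) with rfl | hm
          · simp only [Function.update_self]
            exact hf'eq ▸ Set.iInter_subset f' k
          · simp only [Function.update_of_ne hm]
            exact fun z hz => hSf m k ((hS'sub hz).1)
      · refine ⟨fun z hz => ⟨(hS'sub hz).1, hGsub (hS'sub hz).2⟩, hnp, ?_, ?_, ?_, ?_, ?_, ?_⟩
        · exact fun y hy => hGsub (hcbO hy).1.1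
        · intro m hm k hk y hy
          have := (hcbO' hy).1.2
          simp only [Set.mem_iInter] at this
          exact this m (Finset.mem_range.2 (Nat.lt_succ_of_le hm)) k
            (Finset.mem_range.2 (Nat.lt_succ_of_le hk))
        · intro m hm
          exact Function.update_of_ne (by omega) _ _
        · simp only [Function.update_self]; exact hf'eq.symm
        · exact fun y hy => (hcbO' hy).1.1
        · exact fun y hy => (hcbO' (Metric.ball_subset_closedBall hy)).2
    by_cases hcase : ∃ V : Set X, IsOpen V ∧ V ∩ P n = ∅ ∧
        (prev.S ∩ (Metric.ball prev.x prev.r ∩ V)).Nonempty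
    · obtain ⟨V, hVopen, hVP, hVne⟩ := hcase
      obtain ⟨next, hgood, h1, h2, h3, h4, h5, h6, h7, h8⟩ :=
        main (Metric.ball prev.x prev.r ∩ V)
          (Metric.isOpen_ball.inter hVopen) Set.inter_subset_left hVne
      refine ⟨next, hgood, h1, h2, h3, h4, h5, h6, Or.inl ?_, h8⟩
      rw [Set.eq_empty_iff_forall_notMem]
      rintro z ⟨hz1, hz2⟩
      exact Set.eq_empty_iff_forall_notMem.1 hVP z ⟨(h7 hz1).2, hz2⟩
    · push_neg at hcase
      obtain ⟨next, hgood, h1, h2, h3, h4, h5, h6, h7, h8⟩ :=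
        main (Metric.ball prev.x prev.r) Metric.isOpen_ball le_rfl
          ⟨prev.x, hxS, Metric.mem_ball_self hr⟩
      refine ⟨next, hgood, h1, h2, h3, h4, h5, h6, Or.inr ?_, h8⟩
      intro V hVopen hVP
      rw [Set.inter_assoc]
      exact hcase V hVopen hVP
  -- initial stage
  obtain ⟨x₀, hx₀⟩ := (hFmem S₀ hS₀F).1
  obtain ⟨f₀, hf₀o, hf₀eq⟩ := (hFmem S₀ hS₀F).2.eq_iInter_nat
  set st₀ : ForanStage X := ⟨S₀, x₀, 1, h / 2,
    fun m => if m = 0 then f₀ else fun _ => Set.univ⟩ with hst₀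
  have hgood₀ : Good st₀ := by
    refine ⟨hS₀F, hx₀, one_pos, show (0:ℝ) < h / 2 by linarith, show h / 2 < h by linarith, ?_, ?_⟩
    · intro m k
      show IsOpen ((if m = 0 then f₀ else fun _ => Set.univ) k)
      split
      · exact hf₀o k
      · exact isOpen_univ
    · intro m k
      show S₀ ⊆ (if m = 0 then f₀ else fun _ => Set.univ) k
      split
      · exact hf₀eq ▸ Set.iInter_subset f₀ k
      · exact Set.subset_univ _
  -- build the sequence
  choose! nextF hgoodF hrelF using step
  set st : ℕ → ForanStage X := fun n =>
    Nat.rec st₀ (fun n ih => nextF n ih) n with hstdef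
  have hgood : ∀ n, Good (st n) := by
    intro n
    induction n with
    | zero => exact hgood₀
    | succ n ih => exact hgoodF n (st n) ih
  have hrel : ∀ n, Rel n (st n) (st (n + 1)) := fun n => hrelF n (st n) (hgood n)
  -- basic sequence facts
  have hnest : ∀ n m, m ≤ n → (st n).S ⊆ (st m).S := by
    intro n
    induction n with
    | zero => intro m hm; rw [Nat.le_zero.1 hm]
    | succ n ih =>
      intro m hm
      rcases Nat.eq_or_lt_of_le hm with rfl | hlt
      · exact fun z hz => hz
      · exact fun z hz => ih m (Nat.lt_succ_iff.1 hlt) (((hrel n).1 hz).1)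
  have hxball : ∀ n l, n + 1 ≤ l → (st l).x ∈ Metric.ball (st n).x (st n).r := by
    intro n l hl
    rcases Nat.eq_or_lt_of_le hl with rfl | hlt
    · exact (hrel n).1 (hgood (n+1)).2.1 |>.2
    · exact ((hrel n).1 (hnest l (n+1) hlt.le (hgood l).2.1)).2
  -- the limit point
  have hBm : ∀ n l, n + 1 ≤ l → (st l).x ∈ Bm ((st (n+1)).x) ((1/2)^(n+1)) := by
    intro n l hl
    rcases Nat.eq_or_lt_of_le hl with rfl | hlt
    · exact hBmem _ _ (by positivity)
    · exact (hrel n).2.2.2.2.2.2.2 (hxball (n+1) l hlt)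
  obtain ⟨y, hy⟩ := hBlim (fun n => (st n).x) (fun n l hl => hBm n l hl)
  have hycb : ∀ n, y ∈ Metric.closedBall ((st (n+1)).x) ((st (n+1)).r) := by
    intro n
    refine Metric.isClosed_closedBall.mem_of_tendsto hy ?_
    filter_upwards [Filter.eventually_ge_atTop (n + 2)] with l hl
    exact Metric.ball_subset_closedBall (hxball (n+1) l (by omega))
  -- y belongs to every S m
  have hfams_pres : ∀ n m, m ≤ n → (st n).fams m = (st m).fams m := by
    intro n
    induction n with
    | zero => intro m hm; rw [Nat.le_zero.1 hm]
    | succ n ih =>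
      intro m hm
      rcases Nat.eq_or_lt_of_le hm with rfl | hlt
      · rfl
      · rw [(hrel n).2.2.2.2.1 m (Nat.lt_succ_iff.1 hlt), ih m (Nat.lt_succ_iff.1 hlt)]
  have hyfams : ∀ m k, y ∈ (st m).fams m k := by
    intro m k
    have hn : m ≤ max m k := le_max_left _ _
    have hk : k ≤ max m k := le_max_right _ _
    have := (hrel (max m k)).2.2.2.1 m hn k hk (hycb (max m k))
    rwa [hfams_pres (max m k) m hn] at this
  have hyS : ∀ m, y ∈ (st m).S := by
    intro m
    match m with
    | 0 =>
      have : y ∈ ⋂ k, f₀ k := Set.mem_iInter.2 fun k => by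
        have := hyfams 0 k
        simpa [hstdef, hst₀] using this
      have h0 : (st 0).S = S₀ := rfl
      rw [h0, hf₀eq]
      exact this
    | Nat.succ m =>
      have heq : ⋂ k, (st (m+1)).fams (m+1) k = (st (m+1)).S := (hrel m).2.2.2.2.2.1
      exact heq ▸ Set.mem_iInter.2 fun k => hyfams (m+1) k
  -- y lies in some P N
  have hyS₀ : y ∈ S₀ := hyS 0
  have hyA : y ∈ ⋃ n, Bseq n := hAeq ▸ hS₀A hyS₀
  obtain ⟨N, hN⟩ := Set.mem_iUnion.1 hyA
  have hyP : y ∈ P N := ⟨hN, hyS₀⟩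
  -- contradiction via stage N
  have hrelN := hrel N
  rcases hrelN.2.2.2.2.2.2.1 with hdisj | hcase2
  · exact Set.eq_empty_iff_forall_notMem.1 hdisj y ⟨hycb N, hyP⟩
  · -- build porosity of (st N).S at y
    set t := (st (N+1)).t with htdef
    have htpos : 0 < t := (hgood (N+1)).2.2.2.1
    have hth : t < h := (hgood (N+1)).2.2.2.2.1
    have hploc : ∀ j : ℕ, ∃ c ρ, 0 < ρ ∧ ρ < h ∧ ρ < min t (1/((j:ℝ)+1)) ∧
        dist y c < min t (1/((j:ℝ)+1)) ∧ dist y c < g ρ ∧ Metric.ball c ρ ∩ P N = ∅ :=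
      fun j => gporousAt_loc hh hg0 hg (hPpor N y hyP) (lt_min htpos (by positivity))
    choose c ρ q1 q2 q3 q4 q5 q6 using hploc
    have hsub : ∀ j, Metric.ball (c j) (ρ j) ⊆ Metric.ball (st N).x (st N).r := by
      intro j z hz
      apply hrelN.2.2.1
      rw [Metric.mem_closedBall]
      have d1 : dist z (c j) < ρ j := Metric.mem_ball.1 hz
      have d2 : dist y (c j) < t := (q4 j).trans_le (min_le_left _ _)
      have d3 : dist y ((st (N+1)).x) ≤ (st (N+1)).r := Metric.mem_closedBall.1 (hycb N)
      have d4 : ρ j < t := (q3 j).trans_le (min_le_left _ _)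
      calc dist z ((st (N+1)).x) ≤ dist z (c j) + dist (c j) y + dist y ((st (N+1)).x) :=
            dist_triangle4 _ _ _ _
        _ ≤ dist z (c j) + dist y (c j) + dist y ((st (N+1)).x) := le_of_eq (by rw [dist_comm (c j) y])
        _ ≤ (st (N+1)).r + 2 * t := by linarith
    have hdisjS : ∀ j, Metric.ball (c j) (ρ j) ∩ (st N).S = ∅ := by
      intro j
      have hkey := hcase2 (Metric.ball (c j) (ρ j)) Metric.isOpen_ball (q6 j)
      rw [Set.eq_empty_iff_forall_notMem]
      rintro z ⟨hz1, hz2⟩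
      exact Set.eq_empty_iff_forall_notMem.1 hkey z ⟨⟨hz2, hsub j hz1⟩, hz1⟩
    have hpor : GPorousAt g h (st N).S y :=
      ⟨c, ρ, tendsto_of_dist_lt (fun j => (q4 j).trans_le (min_le_right _ _)),
        fun j => ⟨q1 j, q2 j, hdisjS j, Metric.mem_ball.2 (q5 j)⟩⟩
    exact hrelN.2.1 y (hyS (N+1)) hpor


end ForanMain

/-- Converse of the Foran lemma: a nonempty `G_δ` subset of a topologically complete metric
space is not σ-`⟨g⟩`-porous iff it contains a member of some Foran system for
`⟨g⟩`-porosity. -/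
theorem not_sigmaGPorous_iff_contains_foran_member {X : Type*} [MetricSpace X]
    (hX : TopComplete X) (A : Set X) (hA : A.Nonempty) (hGδ : IsGδ A)
    (g : ℝ → ℝ) (h : ℝ) (hh : 0 < h) (hg0 : g 0 = 0) (hg : StrictMonoOn g (Set.Ico 0 h)) :
    ¬ SigmaGPorous g h A ↔ ∃ (F : Set (Set X)) (S : Set X),
      IsForanSystem g h F ∧ S ∈ F ∧ S ⊆ A := by
  constructor
  · intro hnot
    exact forward_dir hh hg0 hg hGδ hnot
  · rintro ⟨F, S, hF, hSF, hSA⟩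
    exact backward_dir hX hh hg0 hg hF hSF hSA
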